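/- The map R : ℝ² → ℝ² defined by R(x, y) = (cos x · sin y, − sin x · cos y) is 1-Lipschitz with respect to the Euclidean norm: for all z, z' ∈ ℝ², ‖R(z) − R(z')‖ ≤ ‖z − z'‖. -/

import Mathlib

/-- The rotation-type operator `R(x, y) = (cos x · sin y, − sin x · cos y)`. -/
noncomputable def rotOp : EuclideanSpace ℝ (Fin 2) → EuclideanSpace ℝ (Fin 2) :=
  fun p => (WithLp.equiv 2 (Fin 2 → ℝ)).symm
    ![Real.cos (p 0) * Real.sin (p 1), -(Real.sin (p 0)) * Real.cos (p 1)]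


lemma sinlip (a b : ℝ) : (Real.sin a - Real.sin b)^2 ≤ (a - b)^2 := by
  rw [Real.sin_sub_sin]
  have h1 : Real.sin ((a-b)/2) ^ 2 ≤ ((a-b)/2)^2 := Real.sin_sq_le_sq
  have h2 : Real.cos ((a+b)/2) ^ 2 ≤ 1 := Real.cos_sq_le_one _
  nlinarith [sq_nonneg (Real.sin ((a-b)/2)), sq_nonneg (Real.cos ((a+b)/2))]

/-- `R` is 1-Lipschitz in the Euclidean norm. -/
theorem rotOp_lipschitz :
    ∀ z z' : EuclideanSpace ℝ (Fin 2), ‖rotOp z - rotOp z'‖ ≤ ‖z - z'‖ := by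
  intro z z'
  rw [EuclideanSpace.norm_eq, EuclideanSpace.norm_eq]
  simp only [rotOp, Fin.sum_univ_two, Real.norm_eq_abs, sq_abs, PiLp.sub_apply,
    WithLp.equiv_symm_apply, PiLp.toLp_apply, Matrix.cons_val_zero, Matrix.cons_val_one, Matrix.head_cons]
  apply Real.sqrt_le_sqrt
  set x := z 0; set y := z 1; set x' := z' 0; set y' := z' 1
  have h1 : Real.cos x * Real.sin y = (Real.sin (x+y) + Real.sin (y-x))/2 := by
    rw [Real.sin_add, Real.sin_sub]; ring
  have h1' : Real.cos x' * Real.sin y' = (Real.sin (x'+y') + Real.sin (y'-x'))/2 := by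
    rw [Real.sin_add, Real.sin_sub]; ring
  have h2 : Real.sin x * Real.cos y = (Real.sin (x+y) - Real.sin (y-x))/2 := by
    rw [Real.sin_add, Real.sin_sub]; ring
  have h2' : Real.sin x' * Real.cos y' = (Real.sin (x'+y') - Real.sin (y'-x'))/2 := by
    rw [Real.sin_add, Real.sin_sub]; ring
  have u := sinlip (x+y) (x'+y')
  have v := sinlip (y-x) (y'-x')
  have key : (Real.cos x * Real.sin y - Real.cos x' * Real.sin y')^2 +
      (-Real.sin x * Real.cos y - -Real.sin x' * Real.cos y')^2
      = ((Real.sin (x+y) - Real.sin (x'+y'))^2 + (Real.sin (y-x) - Real.sin (y'-x'))^2)/2 := by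
    rw [h1, h1', neg_mul, neg_mul, h2, h2']; ring
  rw [key]
  nlinarith [u, v]
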